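/- Let A, B, C ∈ ℝ^{n×n} with C invertible, and set R = I ⊗ (AC⁻¹) and S = I ⊗ B in ℝ^{n²×n²}, where I is the n×n identity matrix and ⊗ is the Kronecker product. If R+S is invertible and the pair {I_{n²}, (R+S)⁻¹(R−S)} has the column W-property (I_{n²} being the n²×n² identity matrix), then for every F ∈ ℝ^{n×n} the new generalized absolute value matrix equation AX + B|CX| = F has exactly one solution X ∈ ℝ^{n×n}. -/

import Mathlib

open Matrix Kronecker

/-- Componentwise absolute value of a real matrix. -/
noncomputable def matAbs {n : ℕ} (M : Matrix (Fin n) (Fin n) ℝ) : Matrix (Fin n) (Fin n) ℝ :=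
  fun i j => |M i j|

/-- The pair {M₁, M₂} has the column W-property: every column representative matrix
(each of whose columns is the corresponding column of M₁ or of M₂) has positive
determinant. -/
def ColumnWProperty {m : Type*} [Fintype m] [DecidableEq m] (M₁ M₂ : Matrix m m ℝ) : Prop :=
  ∀ R : Matrix m m ℝ,
    (∀ j, (fun i => R i j) = (fun i => M₁ i j) ∨ (fun i => R i j) = (fun i => M₂ i j)) →
    0 < R.det

/-! ### Auxiliary development: piecewise-linear LCP maps -/

section LcpAux
variable {ι : Type*} [Fintype ι] [DecidableEq ι]

/-- Piecewise-linear map x ↦ x⁺ − M x⁻. -/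
noncomputable def lcpPhi (M : Matrix ι ι ℝ) (x : ι → ℝ) : ι → ℝ :=
  fun i => max (x i) 0 - ∑ j, M i j * max (-(x j)) 0

/-- Column-combination matrix: column j is t_j e_j + (1−t_j) M_j. -/
def lcpComb (M : Matrix ι ι ℝ) (t : ι → ℝ) : Matrix ι ι ℝ :=
  Matrix.of fun i j => t j * (if i = j then 1 else 0) + (1 - t j) * M i j

def LcpHyp (M : Matrix ι ι ℝ) : Prop :=
  ∀ t : ι → ℝ, (∀ j, t j ∈ Set.Icc (0:ℝ) 1) → 0 < (lcpComb M t).det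

theorem lcpHyp_of_columnW (M : Matrix ι ι ℝ)
    (h : ColumnWProperty (1 : Matrix ι ι ℝ) M) : LcpHyp M := by
  intro t ht
  -- work with the transpose; rows of (lcpComb M t)ᵀ
  have hdet : (lcpComb M t).det = (lcpComb M t)ᵀ.det := (Matrix.det_transpose _).symm
  rw [hdet]
  -- rows
  set u : ι → ι → ℝ := fun j i => if i = j then 1 else 0 with hu
  set v : ι → ι → ℝ := fun j i => M i j with hv
  have hrows : (lcpComb M t)ᵀ = (fun j => t j • u j) + (fun j => (1 - t j) • v j) := by
    funext j i
    simp [lcpComb, u, v, Matrix.transpose_apply, Pi.add_apply, smul_eq_mul]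
  have hdet2 : (lcpComb M t)ᵀ.det
      = (Matrix.detRowAlternating ((lcpComb M t)ᵀ : Matrix ι ι ℝ) : ℝ) := rfl
  rw [hdet2, hrows]
  show (0:ℝ) < (Matrix.detRowAlternating : (ι → ℝ) [⋀^ι]→ₗ[ℝ] ℝ).toMultilinearMap
      ((fun j => t j • u j) + fun j => (1 - t j) • v j)
  rw [(Matrix.detRowAlternating : (ι → ℝ) [⋀^ι]→ₗ[ℝ] ℝ).toMultilinearMap.map_add_univ
    (fun j => t j • u j) (fun j => (1 - t j) • v j)]
  -- each summand
  have key : ∀ s : Finset ι,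
      (Matrix.detRowAlternating : (ι → ℝ) [⋀^ι]→ₗ[ℝ] ℝ).toMultilinearMap
        (s.piecewise (fun j => t j • u j) (fun j => (1 - t j) • v j))
      = (∏ j, if j ∈ s then t j else 1 - t j) *
          (Matrix.of fun j => if j ∈ s then u j else v j).det := by
    intro s
    have hpw : s.piecewise (fun j => t j • u j) (fun j => (1 - t j) • v j)
        = fun j => (if j ∈ s then t j else 1 - t j) • (if j ∈ s then u j else v j) := by
      funext j
      by_cases hj : j ∈ s <;> simp [Finset.piecewise, hj]
    rw [hpw, MultilinearMap.map_smul_univ]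
    rfl
  simp only [key]
  -- each determinant is positive
  have hdetpos : ∀ s : Finset ι,
      0 < (Matrix.of fun j => if j ∈ s then u j else v j).det := by
    intro s
    have := h ((Matrix.of fun j => if j ∈ s then u j else v j)ᵀ) ?_
    · rwa [Matrix.det_transpose] at this
    · intro j
      by_cases hj : j ∈ s
      · left; funext i; simp [hj, u, Matrix.one_apply]
      · right; funext i; simp [hj, v]
  have hwnonneg : ∀ s : Finset ι, 0 ≤ ∏ j, if j ∈ s then t j else 1 - t j := by
    intro s
    apply Finset.prod_nonneg
    intro j _
    by_cases hj : j ∈ s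
    · simpa [hj] using (ht j).1
    · simp only [hj, if_false]
      linarith [(ht j).2]
  apply Finset.sum_pos'
  · intro s _
    exact mul_nonneg (hwnonneg s) (hdetpos s).le
  · -- the set s₁ = {j | t j ≠ 0} has positive weight
    refine ⟨Finset.univ.filter (fun j => t j ≠ 0), Finset.mem_univ _, ?_⟩
    apply mul_pos ?_ (hdetpos _)
    apply Finset.prod_pos
    intro j _
    simp only [Finset.mem_filter, Finset.mem_univ, true_and]
    by_cases hj : t j ≠ 0
    · rw [if_pos hj]
      exact lt_of_le_of_ne (ht j).1 (Ne.symm hj)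
    · rw [if_neg hj]
      push_neg at hj
      rw [hj]; norm_num


lemma maxdiff_mul_nonneg (a b : ℝ) : 0 ≤ (max a 0 - max b 0) * (a - b) := by
  rcases le_total a b with hab | hab
  · have h1 : max a 0 ≤ max b 0 := max_le_max hab le_rfl
    nlinarith [h1]
  · have h1 : max b 0 ≤ max a 0 := max_le_max hab le_rfl
    exact mul_nonneg (by linarith) (by linarith)

lemma maxdiff_abs_le (a b : ℝ) : |max a 0 - max b 0| ≤ |a - b| :=
  abs_max_sub_max_le_abs a b 0

/-- Difference identity: Phi a − Phi b = comb(t) *ᵥ (a − b) for some t in the cube. -/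
lemma lcpPhi_sub (M : Matrix ι ι ℝ) (a b : ι → ℝ) :
    ∃ t : ι → ℝ, (∀ j, t j ∈ Set.Icc (0:ℝ) 1) ∧
      lcpPhi M a - lcpPhi M b = (lcpComb M t) *ᵥ (a - b) := by
  classical
  set d : ι → ℝ := fun j => a j - b j with hd
  set p : ι → ℝ := fun j => max (a j) 0 - max (b j) 0 with hp
  set t : ι → ℝ := fun j => if d j = 0 then (1:ℝ)/2 else p j / d j with htdef
  have htd : ∀ j, t j * d j = p j := by
    intro j
    by_cases hj : d j = 0
    · have : a j = b j := by have := sub_eq_zero.mp hj; exact this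
      simp [htdef, hj, hp, this]
    · simp only [htdef, hj, if_false]
      exact div_mul_cancel₀ _ hj
  refine ⟨t, ?_, ?_⟩
  · intro j
    by_cases hj : d j = 0
    · simp only [htdef, hj, if_true]; constructor <;> norm_num
    · simp only [htdef, hj, if_false]
      have h1 : 0 ≤ p j * d j := maxdiff_mul_nonneg (a j) (b j)
      have h2 : |p j| ≤ |d j| := maxdiff_abs_le (a j) (b j)
      have hdd : 0 < d j * d j := mul_self_pos.mpr hj
      set q := p j / d j with hqdef
      have hq : p j = q * d j := (div_mul_cancel₀ _ hj).symm
      rw [hq] at h1 h2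
      constructor
      · nlinarith
      · have habs : |q| * |d j| ≤ |d j| := by rw [← abs_mul]; simpa using h2
        have : |q| ≤ 1 := le_of_mul_le_mul_right (by simpa using habs) (abs_pos.mpr hj)
        exact le_trans (le_abs_self q) this
  · funext i
    have ht2 : ∀ j, (1 - t j) * d j = -(max (-(a j)) 0 - max (-(b j)) 0) := by
      intro j
      have h3 : p j - (max (-(a j)) 0 - max (-(b j)) 0) = d j := by
        have ha := max_zero_sub_eq_self (a j)
        have hb := max_zero_sub_eq_self (b j)
        simp only [hp, hd]
        linarith
      have := htd j
      nlinarith [htd j, h3]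
    simp only [Pi.sub_apply, lcpPhi, lcpComb, mulVec, dotProduct, Matrix.of_apply]
    have expand : ∀ j, (t j * (if i = j then 1 else 0) + (1 - t j) * M i j) * (a j - b j)
        = (if i = j then p j else 0) + M i j * (-(max (-(a j)) 0 - max (-(b j)) 0)) := by
      intro j
      have e1 : (t j * (if i = j then 1 else 0) + (1 - t j) * M i j) * (a j - b j)
          = (if i = j then (1:ℝ) else 0) * (t j * d j) + M i j * ((1 - t j) * d j) := by
        simp only [hd]; ring
      rw [e1, htd j, ht2 j, ite_mul, one_mul, zero_mul]
    rw [Finset.sum_congr rfl (fun j _ => expand j)]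
    rw [Finset.sum_add_distrib, Finset.sum_ite_eq Finset.univ i p]
    simp only [Finset.mem_univ, if_true]
    have : ∀ j, M i j * (-(max (-(a j)) 0 - max (-(b j)) 0))
        = -(M i j * max (-(a j)) 0) + M i j * max (-(b j)) 0 := by intro j; ring
    rw [Finset.sum_congr rfl (fun j _ => this j), Finset.sum_add_distrib, Finset.sum_neg_distrib]
    simp only [hp]
    ring

lemma mulVec_injective_of_det_pos {A : Matrix ι ι ℝ} (hA : 0 < A.det) {v : ι → ℝ}
    (hv : A *ᵥ v = 0) : v = 0 := by
  have hu : IsUnit A.det := isUnit_iff_ne_zero.mpr (ne_of_gt hA)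
  have := congrArg (fun w => A⁻¹ *ᵥ w) hv
  simpa [Matrix.mulVec_mulVec, Matrix.nonsing_inv_mul A hu] using this

theorem lcpPhi_injective {M : Matrix ι ι ℝ} (hM : LcpHyp M) :
    Function.Injective (lcpPhi M) := by
  intro a b hab
  obtain ⟨t, ht, hsub⟩ := lcpPhi_sub M a b
  have h0 : (lcpComb M t) *ᵥ (a - b) = 0 := by rw [← hsub, hab]; simp
  have := mulVec_injective_of_det_pos (hM t ht) h0
  exact sub_eq_zero.mp this

/-- Uniform bi-Lipschitz lower bound. -/
theorem lcpPhi_lowerBound {M : Matrix ι ι ℝ} (hM : LcpHyp M) :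
    ∃ c : ℝ, 0 < c ∧ ∀ a b : ι → ℝ, c * ‖a - b‖ ≤ ‖lcpPhi M a - lcpPhi M b‖ := by
  classical
  cases isEmpty_or_nonempty ι with
  | inl he =>
    refine ⟨1, one_pos, fun a b => ?_⟩
    have : a - b = 0 := funext fun j => (he.false j).elim
    have h2 : lcpPhi M a - lcpPhi M b = 0 := funext fun j => (he.false j).elim
    rw [this, h2]; simp
  | inr hne =>
    set K : Set ((ι → ℝ) × (ι → ℝ)) :=
      (Set.Icc (0 : ι → ℝ) 1) ×ˢ (Metric.sphere (0 : ι → ℝ) 1) with hK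
    have hcube : IsCompact (Set.Icc (0 : ι → ℝ) 1) := isCompact_Icc
    have hsph : IsCompact (Metric.sphere (0 : ι → ℝ) 1) := isCompact_sphere _ _
    have hKc : IsCompact K := hcube.prod hsph
    have hKne : K.Nonempty := by
      refine ⟨⟨0, (fun _ => 1)⟩, ⟨⟨le_rfl, fun _ => zero_le_one⟩, ?_⟩⟩
      simp [Metric.mem_sphere, dist_eq_norm]
    set F : ((ι → ℝ) × (ι → ℝ)) → ℝ := fun p => ‖(lcpComb M p.1) *ᵥ p.2‖ with hF
    have hFc : Continuous F := by
      apply Continuous.norm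
      apply continuous_pi
      intro i
      simp only [Matrix.mulVec, dotProduct]
      apply continuous_finset_sum
      intro j _
      have h1 : Continuous fun p : (ι → ℝ) × (ι → ℝ) => p.1 j :=
        (continuous_apply j).comp continuous_fst
      have h2 : Continuous fun p : (ι → ℝ) × (ι → ℝ) => p.2 j :=
        (continuous_apply j).comp continuous_snd
      simp only [lcpComb, Matrix.of_apply]
      fun_prop
    obtain ⟨p₀, hp₀K, hmin'⟩ := hKc.exists_isMinOn hKne hFc.continuousOn
    have hmin : ∀ p ∈ K, F p₀ ≤ F p := fun p hp => hmin' hp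
    set c := F p₀ with hc
    have hcpos : 0 < c := by
      rcases hp₀K with ⟨ht₀, hu₀⟩
      have hne0 : (lcpComb M p₀.1) *ᵥ p₀.2 ≠ 0 := by
        intro h0
        have ht₀' : ∀ j, p₀.1 j ∈ Set.Icc (0:ℝ) 1 := by
          intro j
          exact ⟨(Set.mem_Icc.mp ht₀).1 j, (Set.mem_Icc.mp ht₀).2 j⟩
        have := mulVec_injective_of_det_pos (hM p₀.1 ht₀') h0
        rw [Metric.mem_sphere, dist_eq_norm, this] at hu₀
        simp at hu₀
      have : 0 ≤ c := norm_nonneg _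
      rcases this.lt_or_eq with h | h
      · exact h
      · exact absurd (norm_eq_zero.mp h.symm) hne0
    -- scale-invariance step
    have hscale : ∀ t : ι → ℝ, (∀ j, t j ∈ Set.Icc (0:ℝ) 1) → ∀ v : ι → ℝ,
        c * ‖v‖ ≤ ‖(lcpComb M t) *ᵥ v‖ := by
      intro t ht v
      rcases eq_or_ne v 0 with rfl | hv
      · simp
      · have hnv : 0 < ‖v‖ := norm_pos_iff.mpr hv
        set u : ι → ℝ := ‖v‖⁻¹ • v with hu2
        have huK : (t, u) ∈ K := by
          constructor
          · exact Set.mem_Icc.mpr ⟨fun j => (ht j).1, fun j => (ht j).2⟩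
          · simp [Metric.mem_sphere, dist_eq_norm, hu2, norm_smul,
              abs_of_pos (inv_pos.mpr hnv), inv_mul_cancel₀ (ne_of_gt hnv)]
        have hthis : c ≤ ‖(lcpComb M t) *ᵥ u‖ := hmin (t, u) huK
        have heq : ‖(lcpComb M t) *ᵥ u‖ = ‖v‖⁻¹ * ‖(lcpComb M t) *ᵥ v‖ := by
          rw [hu2, Matrix.mulVec_smul, norm_smul, Real.norm_eq_abs,
            abs_of_pos (inv_pos.mpr hnv)]
        rw [heq] at hthis
        calc c * ‖v‖ ≤ (‖v‖⁻¹ * ‖(lcpComb M t) *ᵥ v‖) * ‖v‖ := by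
              apply mul_le_mul_of_nonneg_right hthis hnv.le
          _ = ‖(lcpComb M t) *ᵥ v‖ := by field_simp
    refine ⟨c, hcpos, fun a b => ?_⟩
    obtain ⟨t, ht, hsub⟩ := lcpPhi_sub M a b
    rw [hsub]
    exact hscale t ht (a - b)

end LcpAux

/-- The principal-submatrix hypothesis descends. -/
lemma lcpHyp_submatrix {N : ℕ} (M : Matrix (Fin (N+1)) (Fin (N+1)) ℝ) (hM : LcpHyp M) :
    LcpHyp (M.submatrix Fin.succ Fin.succ) := by
  intro t ht
  have hext : ∀ j : Fin (N+1), (Fin.cons 1 t : Fin (N+1) → ℝ) j ∈ Set.Icc (0:ℝ) 1 := by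
    intro j
    refine Fin.cases ?_ (fun i => ?_) j
    · simp
    · simpa using ht i
  have h := hM (Fin.cons 1 t) hext
  set A := lcpComb M (Fin.cons 1 t) with hA
  have hcol : ∀ i : Fin (N+1), A i 0 = if i = 0 then 1 else 0 := by
    intro i
    simp [hA, lcpComb]
  have hdet : A.det = (A.submatrix Fin.succ Fin.succ).det := by
    rw [Matrix.det_succ_column_zero]
    rw [Finset.sum_eq_single 0]
    · simp [hcol 0, Fin.succAbove_zero]
    · intro i _ hi
      simp [hcol i, hi]
    · simp
  have hsub : A.submatrix Fin.succ Fin.succ = lcpComb (M.submatrix Fin.succ Fin.succ) t := by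
    funext i j
    simp only [hA, lcpComb, Matrix.submatrix_apply, Matrix.of_apply, Fin.cons_succ]
    congr 1
    congr 1
    simp [Fin.succ_inj]
  rw [← hsub, ← hdet]
  exact h

/-- Existence, by induction on the dimension. -/
theorem lcpPhi_surj_fin : ∀ (N : ℕ) (M : Matrix (Fin N) (Fin N) ℝ), LcpHyp M →
    ∀ q : Fin N → ℝ, ∃ x, lcpPhi M x = q := by
  intro N
  induction N with
  | zero =>
    intro M _ q
    exact ⟨0, funext fun i => i.elim0⟩
  | succ N IH =>
    intro M hM q
    classical
    set M' := M.submatrix Fin.succ Fin.succ with hM'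
    have hM'h : LcpHyp M' := lcpHyp_submatrix M hM
    obtain ⟨c, hc, hlow⟩ := lcpPhi_lowerBound hM
    obtain ⟨c', hc', hlow'⟩ := lcpPhi_lowerBound hM'h
    have hsolve : ∀ r : Fin N → ℝ, ∃ x, lcpPhi M' x = r := IH M' hM'h
    set rhs : ℝ → (Fin N → ℝ) := fun t i => q i.succ + M i.succ 0 * max (-t) 0 with hrhs
    choose xp hxp using fun t => hsolve (rhs t)
    set xt : ℝ → (Fin (N+1) → ℝ) := fun t => Fin.cons t (xp t) with hxt
    have hrow : ∀ (t : ℝ) (i : Fin N), lcpPhi M (xt t) i.succ = q i.succ := by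
      intro t i
      have heq : lcpPhi M (xt t) i.succ = lcpPhi M' (xp t) i - M i.succ 0 * max (-t) 0 := by
        simp only [lcpPhi, hxt, Fin.cons_succ, Fin.cons_zero, hM', Matrix.submatrix_apply,
          Fin.sum_univ_succ]
        ring
      rw [heq, hxp t]
      simp [hrhs]
    set g : ℝ → ℝ := fun t => lcpPhi M (xt t) 0 with hg
    have hdiffvec : ∀ t s : ℝ, lcpPhi M (xt t) - lcpPhi M (xt s)
        = fun k => if k = 0 then g t - g s else 0 := by
      intro t s; funext k
      refine Fin.cases ?_ (fun i => ?_) k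
      · simp [hg]
      · simp [hrow t i, hrow s i, Fin.succ_ne_zero]
    have hgrow : ∀ t s : ℝ, c * |t - s| ≤ |g t - g s| := by
      intro t s
      have h1 : |t - s| ≤ ‖xt t - xt s‖ := by
        have h0 : (xt t - xt s) 0 = t - s := by simp [hxt]
        calc |t - s| = ‖(xt t - xt s) 0‖ := by rw [h0]; rfl
          _ ≤ ‖xt t - xt s‖ := norm_le_pi_norm _ 0
      have h2 : ‖lcpPhi M (xt t) - lcpPhi M (xt s)‖ ≤ |g t - g s| := by
        rw [hdiffvec t s]
        refine (pi_norm_le_iff_of_nonneg (abs_nonneg _)).mpr fun k => ?_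
        by_cases hk : k = 0
        · simp [hk]
        · simp [hk, abs_nonneg]
      calc c * |t - s| ≤ c * ‖xt t - xt s‖ := mul_le_mul_of_nonneg_left h1 hc.le
        _ ≤ ‖lcpPhi M (xt t) - lcpPhi M (xt s)‖ := hlow _ _
        _ ≤ |g t - g s| := h2
    -- Lipschitz continuity of xp
    set K : ℝ := ∑ i : Fin N, |M i.succ 0| with hKdef
    have hKnn : 0 ≤ K := Finset.sum_nonneg fun i _ => abs_nonneg _
    have hrhsLip : ∀ t s : ℝ, ‖rhs t - rhs s‖ ≤ K * |t - s| := by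
      intro t s
      refine (pi_norm_le_iff_of_nonneg (by positivity)).mpr fun i => ?_
      have h0 : (rhs t - rhs s) i = M i.succ 0 * (max (-t) 0 - max (-s) 0) := by
        simp [hrhs]; ring
      rw [h0, Real.norm_eq_abs, abs_mul]
      have h1 : |max (-t) 0 - max (-s) 0| ≤ |t - s| := by
        calc |max (-t) 0 - max (-s) 0| ≤ |(-t) - (-s)| := abs_max_sub_max_le_abs _ _ _
          _ = |t - s| := by rw [neg_sub_neg, abs_sub_comm]
      have h2 : |M i.succ 0| ≤ K := by
        apply Finset.single_le_sum (f := fun i : Fin N => |M i.succ 0|)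
          (fun i _ => abs_nonneg _) (Finset.mem_univ i)
      exact mul_le_mul h2 h1 (abs_nonneg _) hKnn
    have hxpLip : ∀ t s : ℝ, ‖xp t - xp s‖ ≤ (K / c') * |t - s| := by
      intro t s
      have h1 : c' * ‖xp t - xp s‖ ≤ ‖rhs t - rhs s‖ := by
        have := hlow' (xp t) (xp s)
        rwa [hxp t, hxp s] at this
      have h2 := le_trans h1 (hrhsLip t s)
      rw [div_mul_eq_mul_div, le_div_iff₀ hc']
      linarith [h2]
    have hxpcont : Continuous xp := by
      refine (LipschitzWith.of_dist_le_mul (K := Real.toNNReal (K / c')) fun t s => ?_).continuous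
      rw [dist_eq_norm, Real.dist_eq, Real.coe_toNNReal _ (by positivity)]
      exact hxpLip t s
    have hxtj : ∀ j : Fin (N+1), Continuous fun t => xt t j := by
      intro j
      refine Fin.cases ?_ (fun i => ?_) j
      · simpa [hxt] using continuous_id'
      · simpa [hxt, Function.comp_def] using (continuous_apply i).comp hxpcont
    have hgcont : Continuous g := by
      have hgeq : g = fun t => max t 0 - ∑ j, M 0 j * max (-(xt t j)) 0 := by
        funext t; simp [hg, lcpPhi, hxt]
      rw [hgeq]
      refine Continuous.sub (continuous_id.max continuous_const) ?_
      refine continuous_finset_sum _ fun j _ => ?_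
      exact continuous_const.mul (((hxtj j).neg).max continuous_const)
    have hginj : Function.Injective g := by
      intro t s hts
      have h1 := hgrow t s
      rw [hts, sub_self, abs_zero] at h1
      have h2 : |t - s| ≤ 0 := by nlinarith [abs_nonneg (t - s)]
      have := abs_eq_zero.mp (le_antisymm h2 (abs_nonneg _))
      linarith [sub_eq_zero.mp this]
    -- choose large T
    set T : ℝ := (|q 0 - g 0| + 1) / c with hT
    have hTpos : 0 < T := by positivity
    have hgT := hgrow T 0
    have hgmT := hgrow (-T) 0
    have hcT : c * T = |q 0 - g 0| + 1 := by
      rw [hT]; field_simp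
    rw [sub_zero, abs_of_pos hTpos, hcT] at hgT
    rw [sub_zero, abs_of_neg (neg_lt_zero.mpr hTpos), neg_neg, hcT] at hgmT
    have habs1 : q 0 - g 0 ≤ |q 0 - g 0| := le_abs_self _
    have habs2 : -(|q 0 - g 0|) ≤ q 0 - g 0 := neg_abs_le _
    have hTT : -T ≤ T := by linarith
    have key : ∃ t : ℝ, g t = q 0 := by
      rcases hgcont.strictMono_of_inj hginj with hmono | hanti
      · have h1 : g 0 < g T := hmono hTpos
        have h2 : g (-T) < g 0 := hmono (neg_lt_zero.mpr hTpos)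
        have e1 : |q 0 - g 0| + 1 ≤ g T - g 0 := by
          rw [← abs_of_pos (sub_pos.mpr h1)]; exact hgT
        have e2 : |q 0 - g 0| + 1 ≤ g 0 - g (-T) := by
          have h4 : |g (-T) - g 0| = g 0 - g (-T) := by
            rw [abs_of_neg (sub_neg.mpr h2)]; ring
          rw [← h4]; exact hgmT
        have hmem : q 0 ∈ Set.Icc (g (-T)) (g T) :=
          Set.mem_Icc.mpr ⟨by linarith, by linarith⟩
        obtain ⟨t, _, htv⟩ := intermediate_value_Icc hTT hgcont.continuousOn hmem
        exact ⟨t, htv⟩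
      · have h1 : g T < g 0 := hanti hTpos
        have h2 : g 0 < g (-T) := hanti (neg_lt_zero.mpr hTpos)
        have e1 : |q 0 - g 0| + 1 ≤ g 0 - g T := by
          have h4 : |g T - g 0| = g 0 - g T := by
            rw [abs_of_neg (sub_neg.mpr h1)]; ring
          rw [← h4]; exact hgT
        have e2 : |q 0 - g 0| + 1 ≤ g (-T) - g 0 := by
          rw [← abs_of_pos (sub_pos.mpr h2)]; exact hgmT
        have hmem : q 0 ∈ Set.Icc (g T) (g (-T)) :=
          Set.mem_Icc.mpr ⟨by linarith, by linarith⟩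
        obtain ⟨t, _, htv⟩ := intermediate_value_Icc' hTT hgcont.continuousOn hmem
        exact ⟨t, htv⟩
    obtain ⟨t, ht⟩ := key
    refine ⟨xt t, funext fun k => ?_⟩
    refine Fin.cases ?_ (fun i => ?_) k
    · exact ht
    · exact hrow t i


section LcpAux2
variable {ι : Type*} [Fintype ι] [DecidableEq ι]

theorem lcpPhi_existsUnique (M : Matrix ι ι ℝ) (hM : LcpHyp M) (q : ι → ℝ) :
    ∃! x : ι → ℝ, lcpPhi M x = q := by
  classical
  obtain ⟨e⟩ : Nonempty (ι ≃ Fin (Fintype.card ι)) := ⟨Fintype.equivFin ι⟩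
  set MF := M.submatrix e.symm e.symm with hMF
  have hMFh : LcpHyp MF := by
    intro t ht
    have hcomb : lcpComb MF t = (lcpComb M (t ∘ e)).submatrix e.symm e.symm := by
      funext i j
      simp only [lcpComb, Matrix.of_apply, Matrix.submatrix_apply, Function.comp_apply,
        Equiv.apply_symm_apply, hMF]
      congr 2
      simp [e.symm.injective.eq_iff]
    rw [hcomb, Matrix.det_submatrix_equiv_self]
    exact hM (t ∘ e) (fun j => ht (e j))
  obtain ⟨x, hx⟩ := lcpPhi_surj_fin _ MF hMFh (q ∘ e.symm)
  have hkey : lcpPhi M (x ∘ e) = q := by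
    funext i
    have h1 : lcpPhi M (x ∘ e) i = lcpPhi MF x (e i) := by
      simp only [lcpPhi, Function.comp_apply, hMF, Matrix.submatrix_apply, Equiv.symm_apply_apply]
      congr 1
      exact (Fintype.sum_equiv e.symm _ _ (fun k => by simp)).symm
    rw [h1, hx]
    simp
  exact ⟨x ∘ e, hkey, fun y hy => lcpPhi_injective hM (hy.trans hkey.symm)⟩


end LcpAux2

-- vec machinery
noncomputable def vecM {n : ℕ} (Y : Matrix (Fin n) (Fin n) ℝ) : (Fin n × Fin n) → ℝ :=
  fun p => Y p.2 p.1

open Kronecker in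
lemma kron_mulVec {n : ℕ} (G Y : Matrix (Fin n) (Fin n) ℝ) :
    ((1 : Matrix (Fin n) (Fin n) ℝ) ⊗ₖ G) *ᵥ vecM Y = vecM (G * Y) := by
  funext p
  obtain ⟨i₁, i₂⟩ := p
  simp only [Matrix.mulVec, dotProduct, vecM, Matrix.mul_apply,
    Matrix.kroneckerMap_apply]
  rw [Fintype.sum_prod_type]
  have : ∀ j₁ : Fin n, ∑ j₂, ((1 : Matrix (Fin n) (Fin n) ℝ) i₁ j₁ * G i₂ j₂) * Y j₂ j₁
      = (if i₁ = j₁ then ∑ j₂, G i₂ j₂ * Y j₂ j₁ else 0) := by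
    intro j₁
    by_cases hj : i₁ = j₁
    · simp [hj, Matrix.one_apply, Finset.mul_sum, mul_assoc]
    · simp [Matrix.one_apply, hj]
  rw [Finset.sum_congr rfl (fun j₁ _ => this j₁), Finset.sum_ite_eq Finset.univ i₁]
  simp

lemma abs_eq_maxmax (a : ℝ) : |a| = max a 0 + max (-a) 0 := by
  rcases le_total a 0 with h | h
  · rw [abs_of_nonpos h, max_eq_right h, max_eq_left (by linarith), zero_add]
  · rw [abs_of_nonneg h, max_eq_left h, max_eq_right (by linarith), add_zero]


theorem ngavme_unique_of_columnW' {n : ℕ} (A B C : Matrix (Fin n) (Fin n) ℝ)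
    (hC : IsUnit C)
    (hRS : IsUnit
      ((1 : Matrix (Fin n) (Fin n) ℝ) ⊗ₖ (A * C⁻¹) + (1 : Matrix (Fin n) (Fin n) ℝ) ⊗ₖ B))
    (h : ColumnWProperty
        (1 : Matrix (Fin n × Fin n) (Fin n × Fin n) ℝ)
        (((1 : Matrix (Fin n) (Fin n) ℝ) ⊗ₖ (A * C⁻¹) + (1 : Matrix (Fin n) (Fin n) ℝ) ⊗ₖ B)⁻¹ *
          ((1 : Matrix (Fin n) (Fin n) ℝ) ⊗ₖ (A * C⁻¹) - (1 : Matrix (Fin n) (Fin n) ℝ) ⊗ₖ B))) :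
    ∀ F : Matrix (Fin n) (Fin n) ℝ,
      ∃! X : Matrix (Fin n) (Fin n) ℝ, A * X + B * matAbs (C * X) = F := by
  intro F
  classical
  set G : Matrix (Fin n) (Fin n) ℝ := A * C⁻¹ with hG
  set R : Matrix (Fin n × Fin n) (Fin n × Fin n) ℝ := (1 : Matrix (Fin n) (Fin n) ℝ) ⊗ₖ G
    with hR
  set S : Matrix (Fin n × Fin n) (Fin n × Fin n) ℝ := (1 : Matrix (Fin n) (Fin n) ℝ) ⊗ₖ B
    with hS
  set T : Matrix (Fin n × Fin n) (Fin n × Fin n) ℝ := R + S with hT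
  set W : Matrix (Fin n × Fin n) (Fin n × Fin n) ℝ := T⁻¹ * (R - S) with hW
  have hWc : ColumnWProperty (1 : Matrix (Fin n × Fin n) (Fin n × Fin n) ℝ) W := h
  have hWh : LcpHyp W := lcpHyp_of_columnW W hWc
  have hdetT : IsUnit T.det := (Matrix.isUnit_iff_isUnit_det _).mp hRS
  have hdetC : IsUnit C.det := (Matrix.isUnit_iff_isUnit_det _).mp hC
  have hCC : C⁻¹ * C = 1 := Matrix.nonsing_inv_mul C hdetC
  set f : (Fin n × Fin n) → ℝ := T⁻¹ *ᵥ vecM F with hf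
  -- the central equivalence
  have hequiv : ∀ X : Matrix (Fin n) (Fin n) ℝ,
      (A * X + B * matAbs (C * X) = F) ↔ lcpPhi W (vecM (C * X)) = f := by
    intro X
    set Y := C * X with hY
    set y := vecM Y with hy
    set yp : (Fin n × Fin n) → ℝ := fun p => max (y p) 0 with hyp
    set ym : (Fin n × Fin n) → ℝ := fun p => max (-(y p)) 0 with hym
    have step1 : A * X = G * Y := by
      rw [hG, hY, Matrix.mul_assoc, ← Matrix.mul_assoc C⁻¹ C X, hCC, Matrix.one_mul]
    have hvecinj : Function.Injective (vecM (n := n)) := by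
      intro P Q hPQ
      funext i j
      exact congrFun hPQ (j, i)
    have habsY : vecM (matAbs Y) = yp + ym := by
      funext p
      simp only [vecM, matAbs, Pi.add_apply, hyp, hym, hy]
      exact abs_eq_maxmax _
    have hysplit : y = yp - ym := by
      funext p
      simp only [Pi.sub_apply, hyp, hym]
      exact (max_zero_sub_eq_self (y p)).symm
    constructor
    · intro hEq
      rw [step1] at hEq
      have hv : vecM (G * Y + B * matAbs Y) = vecM F := by rw [hEq]
      have hv2 : R *ᵥ y + S *ᵥ (yp + ym) = vecM F := by
        rw [← habsY, hy, hR, hS, kron_mulVec, kron_mulVec, ← hv]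
        · funext p; simp [vecM, Matrix.add_apply]
      have hv3 : T *ᵥ yp - (R - S) *ᵥ ym = vecM F := by
        rw [← hv2, hysplit, hT]
        rw [Matrix.mulVec_sub, Matrix.mulVec_add, Matrix.add_mulVec, Matrix.sub_mulVec]
        abel
      have hv4 : yp - W *ᵥ ym = f := by
        rw [hf, ← hv3, Matrix.mulVec_sub, Matrix.mulVec_mulVec, Matrix.mulVec_mulVec,
          Matrix.nonsing_inv_mul T hdetT, Matrix.one_mulVec, hW]
      rw [← hv4]
      funext p
      simp [lcpPhi, Matrix.mulVec, dotProduct, hyp, hym]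
    · intro hEq
      have hv4 : yp - W *ᵥ ym = f := by
        rw [← hEq]
        funext p
        simp [lcpPhi, Matrix.mulVec, dotProduct, hyp, hym]
      have hv3 : T *ᵥ yp - (R - S) *ᵥ ym = vecM F := by
        have := congrArg (fun v => T *ᵥ v) hv4
        simp only [hf] at this
        rw [Matrix.mulVec_sub, Matrix.mulVec_mulVec, hW, ← Matrix.mul_assoc,
          Matrix.mul_nonsing_inv T hdetT, Matrix.one_mul, Matrix.mulVec_mulVec,
          Matrix.mul_nonsing_inv T hdetT, Matrix.one_mulVec] at this
        exact this
      have hv2 : R *ᵥ y + S *ᵥ (yp + ym) = vecM F := by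
        rw [← hv3, hysplit, hT]
        rw [Matrix.mulVec_sub, Matrix.mulVec_add, Matrix.add_mulVec, Matrix.sub_mulVec]
        abel
      rw [step1]
      apply hvecinj
      rw [← hv2, hy, hR, hS]
      rw [show (yp + ym) = vecM (matAbs Y) from habsY.symm]
      rw [kron_mulVec, kron_mulVec]
      funext p; simp [vecM, Matrix.add_apply]
  obtain ⟨y₀, hy₀, hy₀u⟩ := lcpPhi_existsUnique W hWh f
  set X₀ : Matrix (Fin n) (Fin n) ℝ := C⁻¹ * Matrix.of (fun i j => y₀ (j, i)) with hX₀
  have hCX₀ : C * X₀ = Matrix.of (fun i j => y₀ (j, i)) := by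
    rw [hX₀, ← Matrix.mul_assoc, Matrix.mul_nonsing_inv C hdetC, Matrix.one_mul]
  have hvecX₀ : vecM (C * X₀) = y₀ := by
    rw [hCX₀]
    funext p
    simp [vecM]
  refine ⟨X₀, ?_, ?_⟩
  · show A * X₀ + B * matAbs (C * X₀) = F
    rw [hequiv X₀, hvecX₀]
    exact hy₀
  · intro X' hX'
    have hX'' : A * X' + B * matAbs (C * X') = F := hX'
    have h1 : vecM (C * X') = y₀ := hy₀u _ ((hequiv X').mp hX'')
    have h2 : C * X' = C * X₀ := by
      have hvinj : Function.Injective (vecM (n := n)) := by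
        intro P Q hPQ; funext i j; exact congrFun hPQ (j, i)
      apply hvinj
      rw [h1, hvecX₀]
    calc X' = C⁻¹ * (C * X') := by
          rw [← Matrix.mul_assoc, hCC, Matrix.one_mul]
      _ = C⁻¹ * (C * X₀) := by rw [h2]
      _ = X₀ := by rw [← Matrix.mul_assoc, hCC, Matrix.one_mul]
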